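/- arXiv:2302.11002 — 4 statements merged into one kernel-verified Lean document; each statement's English description precedes it below -/
import Mathlib

section
/- Defining μ̃(σ) = μ - ΣGᵀ(σ²I + GΣGᵀ)⁻¹(Gμ - b) and μ* = μ - ΣGᵀ(GΣGᵀ)⁻¹(Gμ - b), the difference satisfies μ̃(σ) - μ* = σ²ΣGᵀ[σ²GΣGᵀ + (GΣGᵀ)²]⁻¹(Gμ - b). -/
open Matrix

theorem stmt_8 {n T : ℕ} (S : Matrix (Fin n) (Fin n) ℝ)
    (G : Matrix (Fin T) (Fin n) ℝ) (μ : Fin n → ℝ) (b : Fin T → ℝ) (σ : ℝ)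
    (hS : S.PosDef) (hG : LinearIndependent ℝ (fun i => G i)) (hσ : 0 < σ) :
    (μ - (S * Gᵀ * (σ ^ 2 • (1 : Matrix (Fin T) (Fin T) ℝ) + G * S * Gᵀ)⁻¹) *ᵥ (G *ᵥ μ - b))
      - (μ - (S * Gᵀ * (G * S * Gᵀ)⁻¹) *ᵥ (G *ᵥ μ - b))
      = (σ ^ 2 • (S * Gᵀ * (σ ^ 2 • (G * S * Gᵀ) + (G * S * Gᵀ) * (G * S * Gᵀ))⁻¹))
          *ᵥ (G *ᵥ μ - b) := by
  -- A = G * S * Gᵀ is positive definite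
  have hApd : (G * S * Gᵀ).PosDef := by
    refine Matrix.PosDef.of_dotProduct_mulVec_pos ?_ (fun x hx => ?_)
    · have h := (hS.posSemidef.mul_mul_conjTranspose_same G).1
      simpa using h
    · have hy : G.vecMul x ≠ 0 := by
        intro h
        exact hx (Matrix.vecMul_injective_iff.mpr hG (by simpa using h))
      have := hS.dotProduct_mulVec_pos (x := G.vecMul x) (by simpa using hy)
      calc (0:ℝ) < star (G.vecMul x) ⬝ᵥ (S *ᵥ (G.vecMul x)) := this
        _ = star x ⬝ᵥ ((G * S * Gᵀ) *ᵥ x) := by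
            simp [← mulVec_mulVec, mulVec_transpose, dotProduct_mulVec,
              star_trivial]
  have hMpd : (σ ^ 2 • (1 : Matrix (Fin T) (Fin T) ℝ) + G * S * Gᵀ).PosDef := by
    refine Matrix.PosDef.add_posSemidef ?_ hApd.posSemidef
    have : (σ ^ 2 • (1 : Matrix (Fin T) (Fin T) ℝ)) = diagonal (fun _ => σ ^ 2) := by
      ext i j
      by_cases h : i = j <;> simp [h, diagonal, one_apply]
    rw [this]
    exact Matrix.PosDef.diagonal fun _ => by positivity
  set A := G * S * Gᵀ with hA
  set M := σ ^ 2 • (1 : Matrix (Fin T) (Fin T) ℝ) + A with hM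
  have hAunit : IsUnit A := hApd.isUnit
  have hMunit : IsUnit M := hMpd.isUnit
  have hAinv := mul_nonsing_inv A (isUnit_iff_isUnit_det _ |>.1 hAunit)
  have hAinv' := nonsing_inv_mul A (isUnit_iff_isUnit_det _ |>.1 hAunit)
  have hMinv := mul_nonsing_inv M (isUnit_iff_isUnit_det _ |>.1 hMunit)
  have hMinv' := nonsing_inv_mul M (isUnit_iff_isUnit_det _ |>.1 hMunit)
  -- σ² A + A² = A * M
  have hfact : σ ^ 2 • A + A * A = A * M := by
    rw [hM, Matrix.mul_add, Matrix.mul_smul, Matrix.mul_one]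
  -- inverse of the product
  have hinv : (σ ^ 2 • A + A * A)⁻¹ = M⁻¹ * A⁻¹ := by
    rw [hfact, Matrix.mul_inv_rev]
  -- key identity: A⁻¹ - M⁻¹ = σ² • (M⁻¹ * A⁻¹)
  have hkey : A⁻¹ - M⁻¹ = σ ^ 2 • (M⁻¹ * A⁻¹) := by
    have h1 : M⁻¹ * (M - A) * A⁻¹ = A⁻¹ - M⁻¹ := by
      rw [Matrix.mul_sub, hMinv', Matrix.sub_mul, Matrix.one_mul, Matrix.mul_assoc, hAinv,
        Matrix.mul_one]
    have h2 : M - A = σ ^ 2 • (1 : Matrix (Fin T) (Fin T) ℝ) := by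
      rw [hM]; ring_nf; abel
    rw [← h1, h2, Matrix.mul_smul, Matrix.mul_one, Matrix.smul_mul]
  have hmat : S * Gᵀ * A⁻¹ - S * Gᵀ * M⁻¹
      = σ ^ 2 • (S * Gᵀ * (σ ^ 2 • A + A * A)⁻¹) := by
    rw [hinv, ← Matrix.mul_sub, hkey, Matrix.mul_smul]
  calc (μ - (S * Gᵀ * M⁻¹) *ᵥ (G *ᵥ μ - b)) - (μ - (S * Gᵀ * A⁻¹) *ᵥ (G *ᵥ μ - b))
      = (S * Gᵀ * A⁻¹ - S * Gᵀ * M⁻¹) *ᵥ (G *ᵥ μ - b) := by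
        rw [Matrix.sub_mulVec]; abel
    _ = (σ ^ 2 • (S * Gᵀ * (σ ^ 2 • A + A * A)⁻¹)) *ᵥ (G *ᵥ μ - b) := by rw [hmat]
end

section
/- As σ ↓ 0, the posterior means μ̃(σ) = μ - ΣGᵀ(σ²I + GΣGᵀ)⁻¹(Gμ - b) converge to μ* = μ - ΣGᵀ(GΣGᵀ)⁻¹(Gμ - b), with ‖μ̃(σ) - μ*‖_{Σ⁻¹} decreasing monotonically to 0. -/
open Matrix Filter

section aux

variable {ι : Type*} [Fintype ι] [DecidableEq ι]

private lemma conj_diag_mul (U : Matrix ι ι ℝ) (hU : star U * U = 1) (f g : ι → ℝ) :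
    (U * diagonal f * star U) * (U * diagonal g * star U)
      = U * diagonal (fun i => f i * g i) * star U := by
  simp only [Matrix.mul_assoc]
  rw [← Matrix.mul_assoc (star U) U, hU, Matrix.one_mul,
    ← Matrix.mul_assoc (diagonal f), diagonal_mul_diagonal]

private lemma conj_diag_inv (U : Matrix ι ι ℝ) (hU : star U * U = 1) (hU' : U * star U = 1)
    (f : ι → ℝ) (hf : ∀ i, f i ≠ 0) :
    (U * diagonal f * star U)⁻¹ = U * diagonal (fun i => (f i)⁻¹) * star U := by
  apply Matrix.inv_eq_right_inv
  rw [conj_diag_mul U hU]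
  have h1 : (fun i => f i * (f i)⁻¹) = fun _ : ι => (1 : ℝ) :=
    funext fun i => mul_inv_cancel₀ (hf i)
  rw [h1, diagonal_one, Matrix.mul_one, hU']

private lemma quad_form {a b : Type*} [Fintype a] [Fintype b]
    (X : Matrix a b ℝ) (C : Matrix a a ℝ) (y : b → ℝ) :
    (X *ᵥ y) ⬝ᵥ (C *ᵥ (X *ᵥ y)) = y ⬝ᵥ ((Xᵀ * C * X) *ᵥ y) := by
  rw [← Matrix.mulVec_mulVec, ← Matrix.mulVec_mulVec, Matrix.dotProduct_mulVec y,
    Matrix.vecMul_transpose]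

private lemma dot_diag (g w : ι → ℝ) :
    w ⬝ᵥ (diagonal g *ᵥ w) = ∑ i, g i * w i ^ 2 := by
  simp only [dotProduct, mulVec_diagonal]
  exact Finset.sum_congr rfl fun i _ => by ring

end aux

theorem stmt_13 {n T : ℕ} (S : Matrix (Fin n) (Fin n) ℝ)
    (G : Matrix (Fin T) (Fin n) ℝ) (μ : Fin n → ℝ) (b : Fin T → ℝ)
    (σ : ℕ → ℝ)
    (hS : S.PosDef) (hG : LinearIndependent ℝ (fun i => G i))
    (hσpos : ∀ k, 0 < σ k) (hσanti : Antitone σ)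
    (hσlim : Tendsto σ atTop (nhds 0)) :
    let μt : ℕ → (Fin n → ℝ) := fun k =>
      μ - (S * Gᵀ * ((σ k) ^ 2 • (1 : Matrix (Fin T) (Fin T) ℝ) + G * S * Gᵀ)⁻¹)
        *ᵥ (G *ᵥ μ - b)
    let μs : Fin n → ℝ := μ - (S * Gᵀ * (G * S * Gᵀ)⁻¹) *ᵥ (G *ᵥ μ - b)
    let d : ℕ → ℝ := fun k => Real.sqrt ((μt k - μs) ⬝ᵥ (S⁻¹ *ᵥ (μt k - μs)))
    Antitone d ∧ Tendsto d atTop (nhds 0) := by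
  set v : Fin T → ℝ := G *ᵥ μ - b with hv
  set A : Matrix (Fin T) (Fin T) ℝ := G * S * Gᵀ with hAdef
  intro μt μs d
  have hSdet : IsUnit S.det := isUnit_iff_ne_zero.mpr hS.det_pos.ne'
  have hSsymm : Sᵀ = S := by
    have h : Sᴴ = S := hS.1
    rwa [conjTranspose_eq_transpose_of_trivial] at h
  have hGne : ∀ x : Fin T → ℝ, x ≠ 0 → Gᵀ *ᵥ x ≠ 0 := by
    intro x hx hcon
    apply hx
    have hsum : ∑ i, x i • G i = 0 := by
      funext j
      have h := congrFun hcon j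
      simpa [Matrix.mulVec, dotProduct, Finset.sum_apply, mul_comm] using h
    exact funext (Fintype.linearIndependent_iff.mp hG x hsum)
  have hA : A.PosDef := by
    rw [posDef_iff_dotProduct_mulVec]
    constructor
    · show Aᴴ = A
      rw [conjTranspose_eq_transpose_of_trivial, hAdef, transpose_mul, transpose_mul,
        transpose_transpose, hSsymm, Matrix.mul_assoc]
    · intro x hx
      have hz : Gᵀ *ᵥ x ≠ 0 := hGne x hx
      have h2 := hS.dotProduct_mulVec_pos hz
      have heq : star x ⬝ᵥ (A *ᵥ x) = star (Gᵀ *ᵥ x) ⬝ᵥ (S *ᵥ (Gᵀ *ᵥ x)) := by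
        simp only [star_trivial, hAdef, ← Matrix.mulVec_mulVec]
        rw [Matrix.dotProduct_mulVec, ← Matrix.mulVec_transpose]
      rw [heq]
      exact h2
  have hH : A.IsHermitian := hA.1
  set lam : Fin T → ℝ := hH.eigenvalues with hlam
  have hlampos : ∀ i, 0 < lam i := fun i => hA.eigenvalues_pos i
  set U : Matrix (Fin T) (Fin T) ℝ := (hH.eigenvectorUnitary : Matrix (Fin T) (Fin T) ℝ)
    with hUdef
  have hU1 : star U * U = 1 := (Unitary.mem_iff.mp (hH.eigenvectorUnitary).2).1
  have hU2 : U * star U = 1 := (Unitary.mem_iff.mp (hH.eigenvectorUnitary).2).2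
  have hstarU : star U = Uᵀ := by
    rw [Matrix.star_eq_conjTranspose, conjTranspose_eq_transpose_of_trivial]
  have hspec : A = U * diagonal lam * star U := by
    have h := hH.spectral_theorem
    simpa using h
  have hAinv : A⁻¹ = U * diagonal (fun i => (lam i)⁻¹) * star U := by
    rw [hspec]
    exact conj_diag_inv U hU1 hU2 _ fun i => (hlampos i).ne'
  have hBspec : ∀ k, (σ k) ^ 2 • (1 : Matrix (Fin T) (Fin T) ℝ) + A
      = U * diagonal (fun i => (σ k) ^ 2 + lam i) * star U := by
    intro k
    have h1 : ((σ k) ^ 2 • (1 : Matrix (Fin T) (Fin T) ℝ))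
        = U * ((σ k) ^ 2 • (1 : Matrix (Fin T) (Fin T) ℝ)) * star U := by
      rw [Matrix.mul_smul, Matrix.mul_one, Matrix.smul_mul, hU2]
    rw [hspec, h1, ← Matrix.add_mul, ← Matrix.mul_add, smul_one_eq_diagonal, diagonal_add]
  have hBinv : ∀ k, ((σ k) ^ 2 • (1 : Matrix (Fin T) (Fin T) ℝ) + A)⁻¹
      = U * diagonal (fun i => ((σ k) ^ 2 + lam i)⁻¹) * star U := by
    intro k
    rw [hBspec k]
    exact conj_diag_inv U hU1 hU2 _ fun i =>
      (add_pos_of_nonneg_of_pos (sq_nonneg _) (hlampos i)).ne'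
  have hMdiff : ∀ k, A⁻¹ - ((σ k) ^ 2 • (1 : Matrix (Fin T) (Fin T) ℝ) + A)⁻¹
      = U * diagonal (fun i => (lam i)⁻¹ - ((σ k) ^ 2 + lam i)⁻¹) * star U := by
    intro k
    rw [hAinv, hBinv k, ← Matrix.sub_mul, ← Matrix.mul_sub, diagonal_sub]
  set w : Fin T → ℝ := star U *ᵥ v with hw
  set F : ℝ → ℝ := fun t =>
    ∑ i, (((lam i)⁻¹ - (t ^ 2 + lam i)⁻¹) ^ 2 * lam i) * w i ^ 2 with hF
  have hd : ∀ k, d k = Real.sqrt (F (σ k)) := by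
    intro k
    show Real.sqrt _ = _
    congr 1
    set Mk : Matrix (Fin T) (Fin T) ℝ :=
      U * diagonal (fun i => (lam i)⁻¹ - ((σ k) ^ 2 + lam i)⁻¹) * star U with hMk
    have hMsymm : Mkᵀ = Mk := by
      rw [hMk, hstarU]
      simp [transpose_mul, Matrix.mul_assoc]
    have hdiff : μt k - μs = (S * Gᵀ * Mk) *ᵥ v := by
      simp only [μt, μs]
      rw [hMk, ← hMdiff k, Matrix.mul_sub, Matrix.sub_mulVec]
      abel
    have hW : (S * Gᵀ * Mk)ᵀ * S⁻¹ * (S * Gᵀ * Mk) = Mk * A * Mk := by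
      rw [transpose_mul (S * Gᵀ) Mk, transpose_mul S Gᵀ, transpose_transpose, hSsymm, hMsymm,
        hAdef]
      simp only [Matrix.mul_assoc]
      rw [← Matrix.mul_assoc S⁻¹ S, Matrix.nonsing_inv_mul S hSdet, Matrix.one_mul]
    have hMAM : Mk * A * Mk = U * diagonal
        (fun i => ((lam i)⁻¹ - ((σ k) ^ 2 + lam i)⁻¹) * lam i
          * ((lam i)⁻¹ - ((σ k) ^ 2 + lam i)⁻¹)) * star U := by
      rw [hMk, hspec, conj_diag_mul U hU1, conj_diag_mul U hU1]
    rw [hdiff, quad_form, hW, hMAM, ← Matrix.mulVec_mulVec, ← Matrix.mulVec_mulVec,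
      Matrix.dotProduct_mulVec]
    have hvU : v ᵥ* U = w := by rw [hw, hstarU, Matrix.mulVec_transpose]
    rw [hvU, ← hw, dot_diag]
    rw [hF]
    exact Finset.sum_congr rfl fun i _ => by ring
  have hterm : ∀ (i : Fin T) (s t : ℝ), 0 < s → s ≤ t →
      (((lam i)⁻¹ - (s ^ 2 + lam i)⁻¹) ^ 2 * lam i) * w i ^ 2
        ≤ (((lam i)⁻¹ - (t ^ 2 + lam i)⁻¹) ^ 2 * lam i) * w i ^ 2 := by
    intro i s t hs hst
    have hls := hlampos i
    have h1 : (s ^ 2 + lam i)⁻¹ ≤ (lam i)⁻¹ := by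
      apply inv_anti₀ hls
      nlinarith
    have h2 : (t ^ 2 + lam i)⁻¹ ≤ (s ^ 2 + lam i)⁻¹ := by
      apply inv_anti₀ (by positivity)
      nlinarith
    have h0 : 0 ≤ (lam i)⁻¹ - (s ^ 2 + lam i)⁻¹ := by linarith
    have hmono : (lam i)⁻¹ - (s ^ 2 + lam i)⁻¹ ≤ (lam i)⁻¹ - (t ^ 2 + lam i)⁻¹ := by linarith
    have hpow := pow_le_pow_left₀ h0 hmono 2
    exact mul_le_mul_of_nonneg_right (mul_le_mul_of_nonneg_right hpow hls.le) (sq_nonneg _)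
  constructor
  · intro k l hkl
    rw [hd l, hd k]
    apply Real.sqrt_le_sqrt
    rw [hF]
    exact Finset.sum_le_sum fun i _ => hterm i (σ l) (σ k) (hσpos l) (hσanti hkl)
  · have hFcont : Continuous F := by
      rw [hF]
      apply continuous_finset_sum
      intro i _
      have h1 : Continuous fun t : ℝ => (t ^ 2 + lam i)⁻¹ :=
        ((continuous_pow 2).add continuous_const).inv₀ fun t =>
          (add_pos_of_nonneg_of_pos (sq_nonneg t) (hlampos i)).ne'
      exact (((continuous_const.sub h1).pow 2).mul continuous_const).mul continuous_const
    have hF0 : F 0 = 0 := by simp [hF]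
    have hteq : (d : ℕ → ℝ) = fun k => Real.sqrt (F (σ k)) := funext hd
    rw [hteq]
    have h := ((Real.continuous_sqrt.comp hFcont).tendsto 0).comp hσlim
    simpa [hF0, Function.comp_def] using h
end

section
/- As σ ↓ 0, the constraint residual ‖Gμ̃(σ) - b‖₂ decreases monotonically to 0, where μ̃(σ) = μ - ΣGᵀ(σ²I + GΣGᵀ)⁻¹(Gμ - b). -/
open Matrix Filter

theorem stmt_14 {n T : ℕ} (S : Matrix (Fin n) (Fin n) ℝ)
    (G : Matrix (Fin T) (Fin n) ℝ) (μ : Fin n → ℝ) (b : Fin T → ℝ)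
    (σ : ℕ → ℝ)
    (hS : S.PosDef) (hG : LinearIndependent ℝ (fun i => G i))
    (hσpos : ∀ k, 0 < σ k) (hσanti : Antitone σ)
    (hσlim : Tendsto σ atTop (nhds 0)) :
    let μt : ℕ → (Fin n → ℝ) := fun k =>
      μ - (S * Gᵀ * ((σ k) ^ 2 • (1 : Matrix (Fin T) (Fin T) ℝ) + G * S * Gᵀ)⁻¹)
        *ᵥ (G *ᵥ μ - b)
    let r : ℕ → ℝ := fun k => Real.sqrt ((G *ᵥ μt k - b) ⬝ᵥ (G *ᵥ μt k - b))
    Antitone r ∧ Tendsto r atTop (nhds 0) := by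
  intro μt r
  classical
  set v : Fin T → ℝ := G *ᵥ μ - b with hv
  set A : Matrix (Fin T) (Fin T) ℝ := G * S * Gᵀ with hAdef
  -- injectivity of Gᵀ *ᵥ ·
  have hGT : Function.Injective (Gᵀ.mulVec) := by
    rw [Matrix.mulVec_injective_iff]
    exact hG
  -- A is positive definite
  have hA : A.PosDef := by
    refine Matrix.PosDef.of_dotProduct_mulVec_pos ?_ (fun x hx => ?_)
    · show Aᴴ = A
      rw [hAdef]
      rw [conjTranspose_mul, conjTranspose_mul, hS.isHermitian.eq,
        conjTranspose_eq_transpose_of_trivial, conjTranspose_eq_transpose_of_trivial,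
        transpose_transpose, Matrix.mul_assoc]
    · have hy : Gᵀ *ᵥ x ≠ 0 := fun h => hx (hGT (by simpa using h))
      have hq : x ⬝ᵥ (A *ᵥ x) = (Gᵀ *ᵥ x) ⬝ᵥ (S *ᵥ (Gᵀ *ᵥ x)) := by
        rw [hAdef, ← Matrix.mulVec_mulVec, ← Matrix.mulVec_mulVec,
          Matrix.dotProduct_mulVec, ← Matrix.vecMul_transpose, ← Matrix.mulVec_transpose]
      have := hS.dotProduct_mulVec_pos hy
      simp only [star_trivial] at this ⊢
      rw [hq]
      exact this
  have hH : A.IsHermitian := hA.isHermitian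
  set N : Matrix (Fin T) (Fin T) ℝ := (hH.eigenvectorUnitary : Matrix (Fin T) (Fin T) ℝ) with hN
  set lam : Fin T → ℝ := hH.eigenvalues with hlamdef
  have hlam : ∀ i, 0 < lam i := hA.eigenvalues_pos
  have h1 : star N * N = 1 := (Unitary.mem_iff.mp hH.eigenvectorUnitary.2).1
  have h2 : N * star N = 1 := (Unitary.mem_iff.mp hH.eigenvectorUnitary.2).2
  have hspec : A = N * diagonal lam * star N := by
    have := hH.spectral_theorem
    simpa [RCLike.ofReal_real_eq_id] using this
  -- product of conjugated diagonals
  have hmul : ∀ f g : Fin T → ℝ,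
      (N * diagonal f * star N) * (N * diagonal g * star N)
        = N * (diagonal fun i => f i * g i) * star N := by
    intro f g
    have hmid : star N * (N * (diagonal g * star N)) = diagonal g * star N := by
      rw [← Matrix.mul_assoc, h1, one_mul]
    simp only [Matrix.mul_assoc]
    rw [hmid, ← Matrix.mul_assoc (diagonal f), diagonal_mul_diagonal]
  -- diagonalization of t•1 + A
  have hPdiag : ∀ t : ℝ, 0 < t →
      t • (1 : Matrix (Fin T) (Fin T) ℝ) + A = N * diagonal (fun i => t + lam i) * star N := by
    intro t ht
    have e1 : N * diagonal (fun _ : Fin T => t) * star N = t • (1 : Matrix (Fin T) (Fin T) ℝ) := by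
      rw [← smul_one_eq_diagonal, Matrix.mul_smul, Matrix.smul_mul, mul_one, h2]
    have e2 : (diagonal fun i => t + lam i)
        = diagonal (fun _ : Fin T => t) + diagonal lam := by
      rw [diagonal_add]
    rw [e2, Matrix.mul_add, Matrix.add_mul, e1, ← hspec]
  have hPinv : ∀ t : ℝ, 0 < t →
      (t • (1 : Matrix (Fin T) (Fin T) ℝ) + A)⁻¹
        = N * diagonal (fun i => (t + lam i)⁻¹) * star N := by
    intro t ht
    apply Matrix.inv_eq_right_inv
    rw [hPdiag t ht, hmul]
    have : (fun i => (t + lam i) * (t + lam i)⁻¹) = fun _ : Fin T => (1 : ℝ) := by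
      funext i
      exact mul_inv_cancel₀ (by have := hlam i; linarith)
    rw [this, diagonal_one, mul_one, h2]
  -- positive definiteness of t•1 + A
  have hPpos : ∀ t : ℝ, 0 < t → (t • (1 : Matrix (Fin T) (Fin T) ℝ) + A).PosDef := by
    intro t ht
    exact Matrix.PosDef.add (by rw [smul_one_eq_diagonal]; exact Matrix.PosDef.diagonal fun _ => ht) hA
  -- residual vector formula
  have hresid : ∀ t : ℝ, 0 < t →
      G *ᵥ (μ - (S * Gᵀ * (t • (1 : Matrix (Fin T) (Fin T) ℝ) + A)⁻¹) *ᵥ v) - b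
        = (N * diagonal (fun i => t / (t + lam i)) * star N) *ᵥ v := by
    intro t ht
    set P := t • (1 : Matrix (Fin T) (Fin T) ℝ) + A with hP
    have hPdet : IsUnit P.det := (hPpos t ht).det_pos.ne'.isUnit
    have h3 : P * P⁻¹ = 1 := Matrix.mul_nonsing_inv _ hPdet
    have key : (1 : Matrix (Fin T) (Fin T) ℝ) - A * P⁻¹ = t • P⁻¹ := by
      calc (1 : Matrix (Fin T) (Fin T) ℝ) - A * P⁻¹
          = P * P⁻¹ - A * P⁻¹ := by rw [h3]
        _ = (P - A) * P⁻¹ := by rw [Matrix.sub_mul]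
        _ = (t • 1) * P⁻¹ := by rw [hP, add_sub_cancel_right]
        _ = t • P⁻¹ := by rw [Matrix.smul_mul, one_mul]
    have lhs_eq : G *ᵥ (μ - (S * Gᵀ * P⁻¹) *ᵥ v) - b = (t • P⁻¹) *ᵥ v := by
      rw [Matrix.mulVec_sub, Matrix.mulVec_mulVec, sub_right_comm, ← hv,
        show G * (S * Gᵀ * P⁻¹) = A * P⁻¹ by rw [hAdef]; simp only [Matrix.mul_assoc],
        ← key, Matrix.sub_mulVec, Matrix.one_mulVec]
    rw [lhs_eq, hPinv t ht]
    have hfe : (fun i => t / (t + lam i)) = t • fun i => (t + lam i)⁻¹ :=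
      funext fun i => div_eq_mul_inv t _
    rw [hfe, diagonal_smul, Matrix.mul_smul, Matrix.smul_mul]
  set w : Fin T → ℝ := star N *ᵥ v with hw
  -- squared norm formula
  have hdot : ∀ dv : Fin T → ℝ,
      ((N * diagonal dv * star N) *ᵥ v) ⬝ᵥ ((N * diagonal dv * star N) *ᵥ v)
        = ∑ i, (dv i) ^ 2 * (w i) ^ 2 := by
    intro dv
    have hy : (N * diagonal dv * star N) *ᵥ v = N *ᵥ (diagonal dv *ᵥ w) := by
      rw [Matrix.mulVec_mulVec, Matrix.mulVec_mulVec]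
    rw [hy]
    have hNT : Nᵀ * N = 1 := by
      rw [← conjTranspose_eq_transpose_of_trivial]
      exact h1
    have hNdot : ∀ y : Fin T → ℝ, (N *ᵥ y) ⬝ᵥ (N *ᵥ y) = y ⬝ᵥ y := by
      intro y
      rw [Matrix.dotProduct_mulVec, ← Matrix.vecMul_transpose, Matrix.vecMul_vecMul,
        hNT, Matrix.vecMul_one]
    rw [hNdot]
    simp only [dotProduct, Matrix.mulVec_diagonal]
    exact Finset.sum_congr rfl fun i _ => by ring
  -- the residual norm as a function of σ k ^ 2
  have hrk : ∀ k, r k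
      = Real.sqrt (∑ i, ((σ k) ^ 2 / ((σ k) ^ 2 + lam i)) ^ 2 * (w i) ^ 2) := by
    intro k
    have ht : 0 < (σ k) ^ 2 := pow_pos (hσpos k) 2
    have e : G *ᵥ μt k - b
        = (N * diagonal (fun i => (σ k) ^ 2 / ((σ k) ^ 2 + lam i)) * star N) *ᵥ v :=
      hresid ((σ k) ^ 2) ht
    calc r k = Real.sqrt ((G *ᵥ μt k - b) ⬝ᵥ (G *ᵥ μt k - b)) := rfl
      _ = _ := by rw [e, hdot]
  -- monotonicity of the scalar function
  have hmono : ∀ s t : ℝ, 0 ≤ s → s ≤ t →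
      (∑ i, (s / (s + lam i)) ^ 2 * (w i) ^ 2)
        ≤ ∑ i, (t / (t + lam i)) ^ 2 * (w i) ^ 2 := by
    intro s t hs hst
    refine Finset.sum_le_sum fun i _ => ?_
    have hlm := hlam i
    have hsd : 0 < s + lam i := by linarith
    have htd : 0 < t + lam i := by linarith
    have h0 : 0 ≤ s / (s + lam i) := div_nonneg hs hsd.le
    have hle : s / (s + lam i) ≤ t / (t + lam i) := by
      rw [div_le_div_iff₀ hsd htd]
      nlinarith
    have hp : (s / (s + lam i)) ^ 2 ≤ (t / (t + lam i)) ^ 2 := by nlinarith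
    exact mul_le_mul_of_nonneg_right hp (sq_nonneg _)
  -- limit of the scalar function
  have hσ2 : Tendsto (fun k => (σ k) ^ 2) atTop (nhds 0) := by
    have := hσlim.pow 2
    simpa using this
  have hglim : Tendsto (fun k => ∑ i, ((σ k) ^ 2 / ((σ k) ^ 2 + lam i)) ^ 2 * (w i) ^ 2)
      atTop (nhds 0) := by
    have hterm : ∀ i : Fin T, Tendsto
        (fun k => ((σ k) ^ 2 / ((σ k) ^ 2 + lam i)) ^ 2 * (w i) ^ 2) atTop (nhds 0) := by
      intro i
      have hlm := hlam i
      have hc : ContinuousAt (fun x : ℝ => (x / (x + lam i)) ^ 2 * (w i) ^ 2) 0 := by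
        have hdiv : ContinuousAt (fun x : ℝ => x / (x + lam i)) 0 :=
          ContinuousAt.div continuousAt_id (continuousAt_id.add continuousAt_const)
            (by simpa using hlm.ne')
        exact (hdiv.pow 2).mul continuousAt_const
      have := hc.tendsto.comp hσ2
      simpa [Function.comp_def] using this
    have := tendsto_finset_sum (Finset.univ : Finset (Fin T)) (fun i _ => hterm i)
    simpa using this
  constructor
  · intro k l hkl
    rw [hrk k, hrk l]
    apply Real.sqrt_le_sqrt
    refine hmono _ _ (sq_nonneg _) ?_
    have := hσanti hkl
    nlinarith [(hσpos l).le, (hσpos k).le]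
  · have hsq : Tendsto (fun k =>
        Real.sqrt (∑ i, ((σ k) ^ 2 / ((σ k) ^ 2 + lam i)) ^ 2 * (w i) ^ 2))
        atTop (nhds 0) := by
      have := (Real.continuous_sqrt.tendsto 0).comp hglim
      simpa [Function.comp_def] using this
    exact hsq.congr fun k => (hrk k).symm
end

section
/- Each diagonal entry of the updated covariance Σ̃(σ) = Σ - ΣGᵀ(σ²I + GΣGᵀ)⁻¹GΣ is at most the corresponding diagonal entry of Σ, and is monotone nondecreasing in σ (diagonal entries shrink as σ decreases). -/
open Matrix

section aux
variable {n T : ℕ}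

lemma aux_diag_nonneg {M : Matrix (Fin n) (Fin n) ℝ} (hM : M.PosSemidef) (i : Fin n) :
    0 ≤ M i i := by
  simpa using hM.dotProduct_mulVec_nonneg (Pi.single i 1)

lemma aux_GSGT_posdef (S : Matrix (Fin n) (Fin n) ℝ) (G : Matrix (Fin T) (Fin n) ℝ)
    (hS : S.PosDef) (hG : LinearIndependent ℝ (fun i => G i)) :
    (G * S * Gᵀ).PosDef := by
  have hGH : Gᴴ = Gᵀ := by ext i j; simp [conjTranspose_apply]
  refine Matrix.posDef_iff_dotProduct_mulVec.mpr ⟨?_, ?_⟩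
  · have := (hS.posSemidef.mul_mul_conjTranspose_same G).1
    rwa [hGH] at this
  · intro x hx
    have hy : Gᵀ *ᵥ x ≠ 0 := by
      intro h
      apply hx
      have h2 : ∑ t, x t • G t = 0 := by
        funext j
        have := congrFun h j
        simpa [mulVec, dotProduct, transpose_apply, mul_comm, Finset.sum_apply] using this
      have := Fintype.linearIndependent_iff.mp hG x h2
      funext t; exact this t
    have key : x ⬝ᵥ (G * S * Gᵀ) *ᵥ x = (Gᵀ *ᵥ x) ⬝ᵥ S *ᵥ (Gᵀ *ᵥ x) := by
      rw [← mulVec_mulVec, ← mulVec_mulVec, dotProduct_mulVec, mulVec_transpose]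
    have := hS.dotProduct_mulVec_pos hy
    rw [star_trivial] at this
    simpa [key] using this

end aux

theorem stmt_19 {n T : ℕ} (S : Matrix (Fin n) (Fin n) ℝ)
    (G : Matrix (Fin T) (Fin n) ℝ)
    (hS : S.PosDef) (hG : LinearIndependent ℝ (fun i => G i)) :
    let St : ℝ → Matrix (Fin n) (Fin n) ℝ := fun σ =>
      S - S * Gᵀ * (σ ^ 2 • (1 : Matrix (Fin T) (Fin T) ℝ) + G * S * Gᵀ)⁻¹ * G * S
    (∀ σ : ℝ, 0 ≤ σ → ∀ i : Fin n, St σ i i ≤ S i i) ∧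
    (∀ σ₁ σ₂ : ℝ, 0 ≤ σ₁ → σ₁ ≤ σ₂ → ∀ i : Fin n, St σ₁ i i ≤ St σ₂ i i) := by
  intro St
  set M : ℝ → Matrix (Fin T) (Fin T) ℝ :=
    fun σ => σ ^ 2 • (1 : Matrix (Fin T) (Fin T) ℝ) + G * S * Gᵀ with hMdef
  have hSt : ∀ σ : ℝ, St σ = S - S * Gᵀ * (M σ)⁻¹ * G * S := fun σ => rfl
  have hGH : Gᴴ = Gᵀ := by ext i j; simp [conjTranspose_apply]
  have hGSH : (G * S)ᴴ = S * Gᵀ := by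
    rw [conjTranspose_mul, hGH, hS.1.eq]
  have hM : ∀ σ : ℝ, (M σ).PosDef := by
    intro σ
    refine Matrix.PosDef.posSemidef_add ?_ (aux_GSGT_posdef S G hS hG)
    rw [smul_one_eq_diagonal]
    exact Matrix.PosSemidef.diagonal (fun i => sq_nonneg σ)
  have hMdet : ∀ σ : ℝ, IsUnit (M σ).det := fun σ =>
    (Matrix.isUnit_iff_isUnit_det _).mp (hM σ).isUnit
  have hassoc : ∀ A : Matrix (Fin T) (Fin T) ℝ,
      S * Gᵀ * A * (G * S) = S * Gᵀ * A * G * S := fun A =>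
    (Matrix.mul_assoc (S * Gᵀ * A) G S).symm
  have hX : ∀ σ : ℝ, (S * Gᵀ * (M σ)⁻¹ * G * S).PosSemidef := by
    intro σ
    have h := Matrix.PosSemidef.conjTranspose_mul_mul_same
      (Matrix.PosDef.posSemidef (Matrix.PosDef.inv (hM σ))) (G * S)
    rwa [hGSH, hassoc] at h
  constructor
  · intro σ hσ i
    have h0 := aux_diag_nonneg (hX σ) i
    rw [hSt, Matrix.sub_apply]
    linarith
  · intro σ₁ σ₂ hσ₁ h12 i
    set t : ℝ := σ₂ ^ 2 - σ₁ ^ 2 with ht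
    have htpos : 0 ≤ t := by nlinarith
    have hMeq : M σ₂ = M σ₁ + t • (1 : Matrix (Fin T) (Fin T) ℝ) := by
      simp only [hMdef, ht, sub_smul]
      abel
    have h1 : (M σ₁).IsHermitian := (hM σ₁).1
    have h1t : (M σ₁)ᵀ = M σ₁ := by
      have := h1.eq
      rwa [← Matrix.conjTranspose_eq_transpose_of_trivial]
    have hcomm : M σ₁ * M σ₂ = M σ₂ * M σ₁ := by
      have hgen : ∀ (A : Matrix (Fin T) (Fin T) ℝ) (c : ℝ),
          A * (A + c • 1) = (A + c • 1) * A := by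
        intro A c
        rw [mul_add, add_mul, Matrix.mul_smul, Matrix.smul_mul, mul_one, one_mul]
      rw [hMeq]; exact hgen _ t
    -- the product M σ₁ * M σ₂ is positive definite
    have hprod : ((M σ₁) * (M σ₂)).PosDef := by
      refine Matrix.posDef_iff_dotProduct_mulVec.mpr ⟨?_, ?_⟩
      · show (M σ₁ * M σ₂)ᴴ = M σ₁ * M σ₂
        rw [conjTranspose_mul, h1.eq, (hM σ₂).1.eq, ← hcomm]
      · intro x hx
        have hy : (M σ₁) *ᵥ x ≠ 0 := by
          intro h
          apply hx
          have h2 := congrArg (fun v => (M σ₁)⁻¹ *ᵥ v) h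
          simpa [mulVec_mulVec, Matrix.nonsing_inv_mul _ (hMdet σ₁)] using h2
        have key : x ⬝ᵥ ((M σ₁) * (M σ₂)) *ᵥ x
            = ((M σ₁) *ᵥ x) ⬝ᵥ ((M σ₂) *ᵥ x) := by
          rw [← mulVec_mulVec, dotProduct_mulVec, ← h1t, vecMul_transpose, h1t]
        have expand : (M σ₂) *ᵥ x = (M σ₁) *ᵥ x + t • x := by
          rw [hMeq, add_mulVec (M σ₁) (t • 1) x, smul_mulVec, one_mulVec]
        have hpos : 0 < ((M σ₁) *ᵥ x) ⬝ᵥ ((M σ₁) *ᵥ x) := by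
          rw [← star_trivial ((M σ₁) *ᵥ x)]
          exact dotProduct_star_self_pos_iff.mpr hy
        have hnn : 0 ≤ ((M σ₁) *ᵥ x) ⬝ᵥ x := by
          have h3 := (hM σ₁).posSemidef.dotProduct_mulVec_nonneg x
          rw [star_trivial] at h3
          rwa [dotProduct_comm] at h3
        rw [star_trivial, key, expand, dotProduct_add, dotProduct_smul, smul_eq_mul]
        nlinarith
    -- the difference of inverses
    have hDiff : (M σ₁)⁻¹ - (M σ₂)⁻¹ = t • ((M σ₁) * (M σ₂))⁻¹ := by
      have e1 : (M σ₂)⁻¹ * (M σ₂ - M σ₁) * (M σ₁)⁻¹ = (M σ₁)⁻¹ - (M σ₂)⁻¹ := by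
        rw [Matrix.mul_sub, Matrix.nonsing_inv_mul _ (hMdet σ₂), Matrix.sub_mul, one_mul,
          Matrix.mul_assoc, Matrix.mul_nonsing_inv _ (hMdet σ₁), Matrix.mul_one]
      have e2 : M σ₂ - M σ₁ = t • (1 : Matrix (Fin T) (Fin T) ℝ) := by
        rw [hMeq]; abel
      rw [← e1, e2, Matrix.mul_inv_rev]
      simp only [Matrix.mul_smul, Matrix.smul_mul, Matrix.mul_one]
    have hDpsd : ((M σ₁)⁻¹ - (M σ₂)⁻¹).PosSemidef := by
      rw [hDiff]
      have hip := (Matrix.PosDef.inv hprod).posSemidef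
      refine Matrix.posSemidef_iff_dotProduct_mulVec.mpr ⟨?_, ?_⟩
      · show (t • (M σ₁ * M σ₂)⁻¹)ᴴ = t • (M σ₁ * M σ₂)⁻¹
        rw [conjTranspose_smul, hip.1.eq, star_trivial]
      · intro x
        rw [smul_mulVec, dotProduct_smul]
        exact smul_nonneg htpos (hip.dotProduct_mulVec_nonneg x)
    have hsand := hDpsd.conjTranspose_mul_mul_same (G * S)
    rw [hGSH] at hsand
    have hdg := aux_diag_nonneg hsand i
    have heq : S * Gᵀ * ((M σ₁)⁻¹ - (M σ₂)⁻¹) * (G * S)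
        = S * Gᵀ * (M σ₁)⁻¹ * G * S - S * Gᵀ * (M σ₂)⁻¹ * G * S := by
      rw [Matrix.mul_sub, Matrix.sub_mul, hassoc, hassoc]
    rw [heq, Matrix.sub_apply] at hdg
    rw [hSt, hSt, Matrix.sub_apply, Matrix.sub_apply]
    linarith
end
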